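/- Let n ≥ 1 and set d := δ_1 + δ_2 + ⋯ + δ_{n−1}. Then: (i) d^ℓ(P_n) = 0 for every ℓ > ⌊n/2⌋; and (ii) if R is a commutative ℚ-algebra, then Σ_{ℓ=0}^{⌊n/2⌋} (1/ℓ!) d^ℓ(P_n) = Σ_{S} δ_S(P_n), where the sum on the right runs over all sparse subsets S of {1,…,n−1} and δ_S denotes the composition of the operators δ_i over i ∈ S taken in increasing order of i. (This is the identity exp(Σ_{i=1}^{n−1} b_{i+1,i} ∂_{a_{i+1}} ∂_{a_i})(a_n ⋯ a_1) = Σ_{ℓ=0}^{⌊n/2⌋} Σ_{1 ≤ i₁ ≪ ⋯ ≪ i_ℓ ≤ n−1} δ_{i₁} ⋯ δ_{i_ℓ}(a_n ⋯ a_1).) -/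

import Mathlib

open MvPolynomial

/-- The monomial `P_n = a_n a_{n-1} ⋯ a_1` in the polynomial ring over `R` in the two
families of indeterminates `a_i = X (Sum.inl i)` and `b_i = X (Sum.inr i)`
(`b_i` plays the role of the symbol `b_{i+1,i}`); `P_0 = 1`. -/
noncomputable def Pmono (R : Type*) [CommRing R] (n : ℕ) : MvPolynomial (ℕ ⊕ ℕ) R :=
  ∏ j ∈ Finset.Icc 1 n, X (Sum.inl j)

/-- The operator `δ_i p = b_i • ∂_{a_{i+1}} ∂_{a_i} p`: multiplication by the variable
`b_i = X (Sum.inr i)` composed with the formal partial derivatives with respect to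
`a_{i+1}` and `a_i`. -/
noncomputable def deltaOp {R : Type*} [CommRing R] (i : ℕ)
    (p : MvPolynomial (ℕ ⊕ ℕ) R) : MvPolynomial (ℕ ⊕ ℕ) R :=
  X (Sum.inr i) * pderiv (Sum.inl (i + 1)) (pderiv (Sum.inl i) p)

/-- The operator `d = δ_1 + δ_2 + ⋯ + δ_{n-1}`. -/
noncomputable def dOp (R : Type*) [CommRing R] (n : ℕ)
    (p : MvPolynomial (ℕ ⊕ ℕ) R) : MvPolynomial (ℕ ⊕ ℕ) R :=
  ∑ i ∈ Finset.Icc 1 (n - 1), deltaOp i p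

/-- The collection of sparse subsets of `{1, …, n-1}`: subsets `S ⊆ {1, …, n-1}` such that
`i ∈ S` implies `i + 1 ∉ S`. -/
def sparseSets (n : ℕ) : Finset (Finset ℕ) :=
  (Finset.Icc 1 (n - 1)).powerset.filter fun S => ∀ i ∈ S, i + 1 ∉ S

noncomputable section
variable {R : Type*} [CommRing R]

def eA (A : Finset (ℕ ⊕ ℕ)) : (ℕ ⊕ ℕ) →₀ ℕ := ∑ v ∈ A, Finsupp.single v 1

lemma eA_apply (A : Finset (ℕ ⊕ ℕ)) (w : ℕ ⊕ ℕ) : eA A w = if w ∈ A then 1 else 0 := by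
  classical
  simp [eA, Finsupp.finset_sum_apply, Finsupp.single_apply, Finset.sum_ite_eq']

def mA (R : Type*) [CommRing R] (A : Finset (ℕ ⊕ ℕ)) : MvPolynomial (ℕ ⊕ ℕ) R :=
  monomial (eA A) 1

lemma mA_empty : mA R ∅ = 1 := by
  simp [mA, eA]

lemma mA_insert {A : Finset (ℕ ⊕ ℕ)} {v : ℕ ⊕ ℕ} (hv : v ∉ A) :
    mA R (insert v A) = X v * mA R A := by
  rw [mA, mA, eA, Finset.sum_insert hv, X, monomial_mul, one_mul]
  rfl

lemma prod_X_eq_mA (A : Finset (ℕ ⊕ ℕ)) : (∏ v ∈ A, (X v : MvPolynomial (ℕ ⊕ ℕ) R)) = mA R A := by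
  classical
  induction A using Finset.induction with
  | empty => simp [mA_empty]
  | insert _ _ hv ih => rw [Finset.prod_insert hv, ih, mA_insert hv]

lemma pderiv_mA (A : Finset (ℕ ⊕ ℕ)) (v : ℕ ⊕ ℕ) :
    pderiv v (mA R A) = if v ∈ A then mA R (A.erase v) else 0 := by
  classical
  rw [mA, pderiv_monomial, one_mul, eA_apply]
  by_cases hv : v ∈ A
  · simp only [hv, if_true]
    have h : eA A - Finsupp.single v 1 = eA (A.erase v) := by
      ext w
      rw [Finsupp.tsub_apply, eA_apply, eA_apply, Finsupp.single_apply]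
      by_cases hw : w = v
      · subst hw; simp [hv]
      · simp [hw, Ne.symm hw, Finset.mem_erase]
    rw [h, mA]
    simp
  · simp [hv]

def Avar (n : ℕ) (S : Finset ℕ) : Finset (ℕ ⊕ ℕ) :=
  S.image Sum.inr ∪ ((Finset.Icc 1 n \ (S ∪ S.image (· + 1))).image Sum.inl)

lemma mem_Avar_inr {n : ℕ} {S : Finset ℕ} {i : ℕ} : Sum.inr i ∈ Avar n S ↔ i ∈ S := by
  simp [Avar]

lemma mem_Avar_inl {n : ℕ} {S : Finset ℕ} {j : ℕ} :
    Sum.inl j ∈ Avar n S ↔ (1 ≤ j ∧ j ≤ n) ∧ j ∉ S ∧ ∀ k ∈ S, k + 1 ≠ j := by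
  simp [Avar, Finset.mem_Icc]

def Qp (R : Type*) [CommRing R] (n : ℕ) (S : Finset ℕ) : MvPolynomial (ℕ ⊕ ℕ) R :=
  mA R (Avar n S)

lemma Qp_empty (n : ℕ) : Qp R n ∅ = Pmono R n := by
  rw [Qp, Pmono, ← prod_X_eq_mA]
  rw [show Avar n ∅ = (Finset.Icc 1 n).image Sum.inl by simp [Avar]]
  rw [Finset.prod_image (by intro a _ b _ h; exact Sum.inl.injEq .. ▸ h)]

lemma delta_Qp_zero {n : ℕ} {S : Finset ℕ} {i : ℕ}
    (hbad : i ∈ S ∨ i + 1 ∈ S ∨ ∃ k ∈ S, k + 1 = i) :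
    deltaOp i (Qp R n S) = 0 := by
  classical
  rw [deltaOp, Qp, pderiv_mA]
  by_cases h1 : Sum.inl i ∈ Avar n S
  · rw [if_pos h1, pderiv_mA]
    rw [mem_Avar_inl] at h1
    have h2 : Sum.inl (i + 1) ∉ (Avar n S).erase (Sum.inl i) := by
      intro hmem
      have := (Finset.mem_erase.mp hmem).2
      rw [mem_Avar_inl] at this
      rcases hbad with h | h | ⟨k, hk, hki⟩
      · exact h1.2.1 h
      · exact this.2.1 h
      · exact h1.2.2 k hk hki
    rw [if_neg h2, mul_zero]
  · rw [if_neg h1, map_zero, mul_zero]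

lemma delta_Qp_ext {n : ℕ} {S : Finset ℕ} {i : ℕ}
    (hsub : S ⊆ Finset.Icc 1 (n - 1)) (hn : 1 ≤ n)
    (hi : i ∈ Finset.Icc 1 (n - 1))
    (h1 : i ∉ S) (h2 : i + 1 ∉ S) (h3 : ∀ k ∈ S, k + 1 ≠ i) :
    deltaOp i (Qp R n S) = Qp R n (insert i S) := by
  classical
  rw [Finset.mem_Icc] at hi
  have hiA : Sum.inl i ∈ Avar n S := by
    rw [mem_Avar_inl]; exact ⟨⟨hi.1, by omega⟩, h1, h3⟩
  have hi1A : Sum.inl (i + 1) ∈ (Avar n S).erase (Sum.inl i) := by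
    rw [Finset.mem_erase, mem_Avar_inl]
    refine ⟨by simp, ⟨by omega, by omega⟩, h2, ?_⟩
    intro k hk hki
    have hki' : k = i := by omega
    exact h1 (hki' ▸ hk)
  rw [deltaOp, Qp, pderiv_mA, if_pos hiA, pderiv_mA, if_pos hi1A]
  have hB : Sum.inr i ∉ ((Avar n S).erase (Sum.inl i)).erase (Sum.inl (i + 1)) := by
    intro h
    have := Finset.mem_of_mem_erase (Finset.mem_of_mem_erase h)
    rw [mem_Avar_inr] at this
    exact h1 this
  rw [← mA_insert hB, Qp]
  congr 1
  ext v
  rcases v with j | j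
  · simp only [Finset.mem_insert, Finset.mem_erase, mem_Avar_inl, ne_eq, Sum.inl.injEq,
      Sum.inr.injEq, reduceCtorEq, false_or]
    constructor
    · rintro ⟨hne1, hne2, hr, hns, hnk⟩
      refine ⟨hr, ?_, ?_⟩
      · rintro (rfl | h)
        · exact hne2 rfl
        · exact hns h
      · rintro k (rfl | hk) hkj
        · exact hne1 hkj.symm
        · exact hnk k hk hkj
    · rintro ⟨hr, hns, hnk⟩
      refine ⟨fun h => hnk i (Or.inl rfl) h.symm, fun h => hns (Or.inl h), hr,
        fun h => hns (Or.inr h), fun k hk => hnk k (Or.inr hk)⟩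
  · simp only [Finset.mem_insert, Finset.mem_erase, mem_Avar_inr, ne_eq, Sum.inr.injEq,
      reduceCtorEq, not_false_eq_true, true_and]

lemma mem_sparseSets {n : ℕ} {S : Finset ℕ} :
    S ∈ sparseSets n ↔ S ⊆ Finset.Icc 1 (n - 1) ∧ ∀ i ∈ S, i + 1 ∉ S := by
  simp [sparseSets]

lemma dOp_Qp {n : ℕ} {S : Finset ℕ} (hn : 1 ≤ n) (hsub : S ⊆ Finset.Icc 1 (n - 1))
    (hsp : ∀ i ∈ S, i + 1 ∉ S) :
    dOp R n (Qp R n S) = ∑ i ∈ (Finset.Icc 1 (n - 1)).filter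
      (fun i => i ∉ S ∧ i + 1 ∉ S ∧ ∀ k ∈ S, k + 1 ≠ i), Qp R n (insert i S) := by
  rw [dOp, ← Finset.sum_filter_of_ne (p := fun i => i ∉ S ∧ i + 1 ∉ S ∧ ∀ k ∈ S, k + 1 ≠ i)
    (fun i _ hne => ?_)]
  · apply Finset.sum_congr rfl
    intro i hi
    rw [Finset.mem_filter] at hi
    exact delta_Qp_ext hsub hn hi.1 hi.2.1 hi.2.2.1 hi.2.2.2
  · by_contra h
    push_neg at h
    apply hne
    apply delta_Qp_zero
    by_cases h1 : i ∈ S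
    · exact Or.inl h1
    · by_cases h2 : i + 1 ∈ S
      · exact Or.inr (Or.inl h2)
      · refine Or.inr (Or.inr ?_)
        by_contra h3
        push_neg at h3
        obtain ⟨k, hk, hki⟩ := h h1 h2
        exact h3 k hk hki

lemma dOp_sum {n : ℕ} {ι : Type*} (t : Finset ι) (f : ι → MvPolynomial (ℕ ⊕ ℕ) R) :
    dOp R n (∑ s ∈ t, f s) = ∑ s ∈ t, dOp R n (f s) := by
  unfold dOp deltaOp
  simp only [map_sum, Finset.mul_sum]
  exact Finset.sum_comm

lemma dOp_nsmul {n : ℕ} (m : ℕ) (p : MvPolynomial (ℕ ⊕ ℕ) R) :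
    dOp R n (m • p) = m • dOp R n p := by
  unfold dOp deltaOp
  simp only [map_nsmul, mul_smul_comm, Finset.smul_sum]

lemma card_le_of_sparse {n : ℕ} {S : Finset ℕ} (hsub : S ⊆ Finset.Icc 1 (n - 1))
    (hsp : ∀ i ∈ S, i + 1 ∉ S) : 2 * S.card ≤ n := by
  classical
  have hdisj : Disjoint S (S.image (· + 1)) := by
    rw [Finset.disjoint_left]
    intro a ha hb
    obtain ⟨k, hk, rfl⟩ := Finset.mem_image.mp hb
    exact hsp k hk ha
  have hsub2 : S ∪ S.image (· + 1) ⊆ Finset.Icc 1 n := by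
    intro a ha
    rcases Finset.mem_union.mp ha with h | h
    · have h2 := hsub h
      rw [Finset.mem_Icc] at *
      omega
    · obtain ⟨k, hk, rfl⟩ := Finset.mem_image.mp h
      have h2 := hsub hk
      rw [Finset.mem_Icc] at *
      omega
  have hc := Finset.card_le_card hsub2
  rw [Finset.card_union_of_disjoint hdisj,
    Finset.card_image_of_injective _ (fun a b h => by omega)] at hc
  simp [Nat.card_Icc] at hc
  omega

set_option maxHeartbeats 1000000 in
lemma dOp_iterate {n : ℕ} (hn : 1 ≤ n) (ℓ : ℕ) :
    (dOp R n)^[ℓ] (Pmono R n) = ℓ.factorial •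
      ∑ S ∈ (sparseSets n).filter (fun S => S.card = ℓ), Qp R n S := by
  classical
  induction ℓ with
  | zero =>
    have h0 : (sparseSets n).filter (fun S => S.card = 0) = {∅} := by
      ext S
      simp only [Finset.mem_filter, Finset.card_eq_zero, Finset.mem_singleton, mem_sparseSets]
      constructor
      · rintro ⟨_, h⟩; exact h
      · rintro rfl; simp
    rw [Function.iterate_zero_apply, h0, Finset.sum_singleton, Qp_empty (R := R) n]
    simp
  | succ ℓ ih =>
    rw [Function.iterate_succ_apply', ih, dOp_nsmul, dOp_sum]
    have hstep : ∑ S ∈ (sparseSets n).filter (fun S => S.card = ℓ), dOp R n (Qp R n S)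
        = ∑ S ∈ (sparseSets n).filter (fun S => S.card = ℓ),
            ∑ i ∈ (Finset.Icc 1 (n - 1)).filter
              (fun i => i ∉ S ∧ i + 1 ∉ S ∧ ∀ k ∈ S, k + 1 ≠ i), Qp R n (insert i S) := by
      apply Finset.sum_congr rfl
      intro S hS
      simp only [Finset.mem_filter, mem_sparseSets] at hS
      have h := dOp_Qp (R := R) hn hS.1.1 hS.1.2
      convert h using 2
    rw [hstep]
    have key : ∑ S ∈ (sparseSets n).filter (fun S => S.card = ℓ),
            ∑ i ∈ (Finset.Icc 1 (n - 1)).filter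
              (fun i => i ∉ S ∧ i + 1 ∉ S ∧ ∀ k ∈ S, k + 1 ≠ i), Qp R n (insert i S)
        = ∑ T ∈ (sparseSets n).filter (fun S => S.card = ℓ + 1), ∑ i ∈ T, Qp R n T := by
      rw [Finset.sum_sigma', Finset.sum_sigma']
      apply Finset.sum_bij'
        (i := fun p _ => (⟨insert p.2 p.1, p.2⟩ : Σ _ : Finset ℕ, ℕ))
        (j := fun p _ => (⟨p.1.erase p.2, p.2⟩ : Σ _ : Finset ℕ, ℕ))
      · rintro ⟨S, i⟩ hp
        simp only [Finset.mem_sigma, Finset.mem_filter, mem_sparseSets] at hp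
        obtain ⟨⟨⟨hsub, hsp⟩, hcard⟩, hiI, h1, h2, h3⟩ := hp
        simp only [Finset.mem_sigma, Finset.mem_filter, mem_sparseSets]
        refine ⟨⟨⟨?_, ?_⟩, ?_⟩, ?_⟩
        · exact Finset.insert_subset hiI hsub
        · intro j hj
          rcases Finset.mem_insert.mp hj with rfl | hj
          · rw [Finset.mem_insert]
            rintro (h | h)
            · omega
            · exact h2 h
          · rw [Finset.mem_insert]
            rintro (h | h)
            · exact h3 j hj h
            · exact hsp j hj h
        · rw [Finset.card_insert_of_notMem h1, hcard]
        · exact Finset.mem_insert_self _ _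
      · rintro ⟨T, i⟩ hp
        simp only [Finset.mem_sigma, Finset.mem_filter, mem_sparseSets] at hp
        obtain ⟨⟨⟨hsub, hsp⟩, hcard⟩, hiT⟩ := hp
        simp only [Finset.mem_sigma, Finset.mem_filter, mem_sparseSets]
        refine ⟨⟨⟨?_, ?_⟩, ?_⟩, ?_, ?_, ?_, ?_⟩
        · exact fun j hj => hsub (Finset.mem_of_mem_erase hj)
        · exact fun j hj h => hsp j (Finset.mem_of_mem_erase hj) (Finset.mem_of_mem_erase h)
        · rw [Finset.card_erase_of_mem hiT, hcard]
          omega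
        · exact hsub hiT
        · simp
        · intro h
          exact hsp i hiT (Finset.mem_of_mem_erase h)
        · intro k hk hki
          exact hsp k (Finset.mem_of_mem_erase hk) (hki ▸ hiT)
      · rintro ⟨S, i⟩ hp
        simp only [Finset.mem_sigma, Finset.mem_filter] at hp
        simp only
        congr 1
        exact Finset.erase_insert hp.2.2.1
      · rintro ⟨T, i⟩ hp
        simp only [Finset.mem_sigma] at hp
        simp only
        congr 1
        exact Finset.insert_erase hp.2
      · rintro ⟨S, i⟩ hp
        rfl
    rw [key]
    have hconst : ∑ T ∈ (sparseSets n).filter (fun S => S.card = ℓ + 1), ∑ i ∈ T, Qp R n T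
        = (ℓ + 1) • ∑ T ∈ (sparseSets n).filter (fun S => S.card = ℓ + 1), Qp R n T := by
      rw [Finset.smul_sum]
      apply Finset.sum_congr rfl
      intro T hT
      rw [Finset.sum_const, (Finset.mem_filter.mp hT).2]
    rw [hconst, smul_smul, Nat.factorial_succ, Nat.mul_comm]

lemma foldr_delta {n : ℕ} (hn : 1 ≤ n) (L : List ℕ) (hs : L.Pairwise (· < ·))
    (hr : ∀ i ∈ L, i ∈ Finset.Icc 1 (n - 1)) (hsp : ∀ i ∈ L, i + 1 ∉ L) :
    L.foldr (fun i q => deltaOp i q) (Pmono R n) = Qp R n L.toFinset := by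
  induction L with
  | nil => simp [Qp_empty (R := R) n]
  | cons i L ih =>
    obtain ⟨hlt, hs'⟩ := List.pairwise_cons.mp hs
    rw [List.foldr_cons, ih hs' (fun j hj => hr j (List.mem_cons_of_mem _ hj))
      (fun j hj h => hsp j (List.mem_cons_of_mem _ hj) (List.mem_cons_of_mem _ h))]
    rw [delta_Qp_ext (n := n)
      (fun j hj => hr j (List.mem_cons_of_mem _ (List.mem_toFinset.mp hj)))
      hn (hr i (List.mem_cons_self (a := i) (l := L)))
      (fun h => lt_irrefl i (hlt i (List.mem_toFinset.mp h)))
      (fun h => hsp i (List.mem_cons_self (a := i) (l := L)) (List.mem_cons_of_mem _ (List.mem_toFinset.mp h)))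
      (fun k hk h => by have := hlt k (List.mem_toFinset.mp hk); omega)]
    rw [List.toFinset_cons]

end

/-- Let `n ≥ 1` and `d = δ_1 + ⋯ + δ_{n-1}`.  Then
(i) `d^ℓ (P_n) = 0` for every `ℓ > ⌊n/2⌋`; and
(ii) if `R` is a commutative `ℚ`-algebra, then
`∑_{ℓ=0}^{⌊n/2⌋} (1/ℓ!) d^ℓ (P_n) = ∑_{S sparse ⊆ {1,…,n-1}} δ_S (P_n)`,
where `δ_S` is the composition of the `δ_i` over `i ∈ S` taken in increasing order of `i`. -/
theorem exp_d_eq_sum_sparse (n : ℕ) (hn : 1 ≤ n) :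
    (∀ (R : Type*) [CommRing R], ∀ ℓ : ℕ, n / 2 < ℓ → (dOp R n)^[ℓ] (Pmono R n) = 0) ∧
    (∀ (R : Type*) [CommRing R] [Algebra ℚ R],
      ∑ ℓ ∈ Finset.range (n / 2 + 1), ((ℓ.factorial : ℚ)⁻¹) • (dOp R n)^[ℓ] (Pmono R n) =
        ∑ S ∈ sparseSets n, (S.sort (· ≤ ·)).foldr (fun i q => deltaOp i q) (Pmono R n)) := by
  constructor
  · intro R _ ℓ hℓ
    rw [dOp_iterate hn ℓ]
    have he : (sparseSets n).filter (fun S => S.card = ℓ) = ∅ := by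
      rw [Finset.filter_eq_empty_iff]
      intro S hS
      rw [mem_sparseSets] at hS
      have := card_le_of_sparse hS.1 hS.2
      omega
    rw [he]
    simp
  · intro R _ _
    have h1 : ∀ ℓ ∈ Finset.range (n / 2 + 1),
        ((ℓ.factorial : ℚ)⁻¹) • (dOp R n)^[ℓ] (Pmono R n)
          = ∑ S ∈ (sparseSets n).filter (fun S => S.card = ℓ), Qp R n S := by
      intro ℓ _
      rw [dOp_iterate hn ℓ, ← Nat.cast_smul_eq_nsmul ℚ, smul_smul,
        inv_mul_cancel₀ (by exact_mod_cast ℓ.factorial_ne_zero), one_smul]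
    rw [Finset.sum_congr rfl h1]
    have hmap : ∀ S ∈ sparseSets n, S.card ∈ Finset.range (n / 2 + 1) := by
      intro S hS
      rw [mem_sparseSets] at hS
      have := card_le_of_sparse hS.1 hS.2
      rw [Finset.mem_range]
      omega
    rw [Finset.sum_fiberwise_of_maps_to hmap (Qp R n)]
    apply Finset.sum_congr rfl
    intro S hS
    rw [mem_sparseSets] at hS
    rw [foldr_delta (R := R) hn _ (Finset.sortedLT_sort S).pairwise
      (fun i hi => hS.1 ((Finset.mem_sort _).mp hi))
      (fun i hi h => hS.2 i ((Finset.mem_sort _).mp hi) ((Finset.mem_sort _).mp h)),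
      Finset.sort_toFinset]
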